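/- Let X : Matrix (Fin N) (Fin N) ℝ be symmetric and Y : Matrix (Fin N) (Fin s) ℝ. Then X is negative definite if and only if there exists δ > 0 such that the block matrix Matrix.fromBlocks X Y Yᵀ (-δ • 1) is negative definite. -/

import Mathlib

open Matrix

lemma quad_cont {n : ℕ} (A : Matrix (Fin n) (Fin n) ℝ) :
    Continuous fun x : Fin n → ℝ => x ⬝ᵥ A *ᵥ x := by
  simp only [dotProduct, mulVec]
  exact continuous_finset_sum _ fun i _ =>
    (continuous_apply i).mul <| continuous_finset_sum _ fun j _ =>
      continuous_const.mul (continuous_apply j)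

lemma exists_sub_smul_posDef {n : ℕ} {A S : Matrix (Fin n) (Fin n) ℝ}
    (hA : A.PosDef) (hS : S.PosSemidef) :
    ∃ δ : ℝ, 0 < δ ∧ (A - δ⁻¹ • S).PosDef := by
  have hherm : ∀ δ : ℝ, (A - δ⁻¹ • S).IsHermitian := by
    intro δ
    refine hA.1.sub ?_
    show ((δ⁻¹ • S)ᴴ = _)
    rw [conjTranspose_smul, hS.1.eq]
    simp
  rcases Nat.eq_zero_or_pos n with hn | hn
  · subst hn
    refine ⟨1, one_pos, hherm 1, fun x hx => absurd ?_ hx⟩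
    ext i; exact absurd i.2 (by simp)
  · haveI : Nontrivial (Fin n → ℝ) := by
      haveI : NeZero n := ⟨hn.ne'⟩
      infer_instance
    obtain ⟨a, haS, ha⟩ := (isCompact_sphere (0 : Fin n → ℝ) 1).exists_isMinOn
      (NormedSpace.sphere_nonempty.mpr zero_le_one) (quad_cont A).continuousOn
    obtain ⟨b, hbS, hb⟩ := (isCompact_sphere (0 : Fin n → ℝ) 1).exists_isMaxOn
      (NormedSpace.sphere_nonempty.mpr zero_le_one) (quad_cont S).continuousOn
    set ε : ℝ := a ⬝ᵥ A *ᵥ a with hεdef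
    set M : ℝ := b ⬝ᵥ S *ᵥ b with hMdef
    have hε : 0 < ε := by
      have := hA.dotProduct_mulVec_pos (x := a) (by
        intro h; rw [mem_sphere_zero_iff_norm] at haS; rw [h] at haS; simp at haS)
      simpa using this
    have hM : 0 ≤ M := by simpa using hS.dotProduct_mulVec_nonneg b
    refine ⟨(M + 1) / ε, by positivity, PosDef.of_dotProduct_mulVec_pos (hherm _) fun x hx => ?_⟩
    have hxn : (0:ℝ) < ‖x‖ := norm_pos_iff.mpr hx
    set u : Fin n → ℝ := ‖x‖⁻¹ • x with hudef
    have hu : u ∈ Metric.sphere (0 : Fin n → ℝ) 1 := by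
      rw [mem_sphere_zero_iff_norm, hudef, norm_smul, norm_inv, norm_norm,
        inv_mul_cancel₀ hxn.ne']
    have hfu : ε ≤ u ⬝ᵥ A *ᵥ u := ha hu
    have hgu : u ⬝ᵥ S *ᵥ u ≤ M := hb hu
    have hgu0 : 0 ≤ u ⬝ᵥ S *ᵥ u := by simpa using hS.dotProduct_mulVec_nonneg u
    have hx_eq : x = ‖x‖ • u := by
      rw [hudef, smul_smul, mul_inv_cancel₀ hxn.ne', one_smul]
    have hquad : ∀ B : Matrix (Fin n) (Fin n) ℝ,
        x ⬝ᵥ B *ᵥ x = ‖x‖ * (‖x‖ * (u ⬝ᵥ B *ᵥ u)) := by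
      intro B
      conv_lhs => rw [hx_eq]
      rw [mulVec_smul, smul_dotProduct, dotProduct_smul]
      simp [smul_eq_mul]
    have hexp : star x ⬝ᵥ (A - ((M + 1) / ε)⁻¹ • S) *ᵥ x
        = x ⬝ᵥ A *ᵥ x - ((M + 1) / ε)⁻¹ * (x ⬝ᵥ S *ᵥ x) := by
      rw [sub_mulVec, dotProduct_sub, smul_mulVec, dotProduct_smul]
      simp [smul_eq_mul]
    rw [hexp, hquad A, hquad S]
    have hinv : ((M + 1) / ε)⁻¹ = ε / (M + 1) := by
      rw [inv_div]
    rw [hinv]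
    have h1 : ε / (M + 1) * (u ⬝ᵥ S *ᵥ u) ≤ ε / (M + 1) * M :=
      mul_le_mul_of_nonneg_left hgu (by positivity)
    have h2 : ε / (M + 1) * M < ε := by
      rw [div_mul_eq_mul_div, mul_comm, ← div_mul_eq_mul_div]
      calc M / (M + 1) * ε < 1 * ε := by
            apply mul_lt_mul_of_pos_right _ hε
            rw [div_lt_one (by linarith)]; linarith
        _ = ε := one_mul ε
    nlinarith [sq_nonneg ‖x‖, mul_pos hxn hxn]

theorem negDef_iff_exists_augmented_negDef
    (N sd : ℕ) (X : Matrix (Fin N) (Fin N) ℝ) (hX : X.IsSymm)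
    (Y : Matrix (Fin N) (Fin sd) ℝ) :
    (-X).PosDef ↔
      ∃ δ : ℝ, 0 < δ ∧
        (-(Matrix.fromBlocks X Y Yᵀ
            (-(δ • (1 : Matrix (Fin sd) (Fin sd) ℝ))))).PosDef := by
  constructor
  · intro h
    have hS : (Y * Yᵀ).PosSemidef := by
      have := Matrix.posSemidef_self_mul_conjTranspose Y
      rwa [conjTranspose_eq_transpose_of_trivial] at this
    obtain ⟨δ, hδ, hkey⟩ := exists_sub_smul_posDef h hS
    refine ⟨δ, hδ, ?_⟩
    have hD : (δ • (1 : Matrix (Fin sd) (Fin sd) ℝ)).PosDef := by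
      rw [smul_one_eq_diagonal]
      exact Matrix.PosDef.diagonal fun _ => hδ
    have hrw : -(Matrix.fromBlocks X Y Yᵀ (-(δ • (1 : Matrix (Fin sd) (Fin sd) ℝ))))
        = Matrix.fromBlocks (-X) (-Y) (-Y)ᴴ (δ • 1) := by
      rw [fromBlocks_neg, neg_neg, conjTranspose_neg,
        conjTranspose_eq_transpose_of_trivial]
    rw [hrw]
    set A := -X
    set B := -Y
    set D := δ • (1 : Matrix (Fin sd) (Fin sd) ℝ)
    haveI : Invertible D := D.invertibleOfIsUnitDet (isUnit_iff_ne_zero.mpr hD.det_pos.ne')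
    have hDinv : D⁻¹ = δ⁻¹ • (1 : Matrix (Fin sd) (Fin sd) ℝ) := by
      apply Matrix.inv_eq_right_inv
      show (δ • (1 : Matrix (Fin sd) (Fin sd) ℝ)) * _ = 1
      rw [Matrix.smul_mul, Matrix.mul_smul, Matrix.one_mul, smul_smul,
        mul_inv_cancel₀ hδ.ne', one_smul]
    have hschur : A - B * D⁻¹ * Bᴴ = A - δ⁻¹ • (Y * Yᵀ) := by
      rw [hDinv]
      show A - -Y * (δ⁻¹ • 1) * (-Y)ᴴ = _
      rw [conjTranspose_neg, conjTranspose_eq_transpose_of_trivial,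
        Matrix.mul_smul, Matrix.mul_one, Matrix.smul_mul]
      congr 1
      rw [Matrix.neg_mul, Matrix.mul_neg, neg_neg]
    have hkey' : (A - B * D⁻¹ * Bᴴ).PosDef := by rw [hschur]; exact hkey
    refine PosDef.of_dotProduct_mulVec_pos ((Matrix.IsHermitian.fromBlocks₂₂ A B hD.1).mpr hkey'.1) fun x hx => ?_
    rw [dotProduct_mulVec, ← Sum.elim_comp_inl_inr x,
      schur_complement_eq₂₂ A B _ _ hD.1]
    by_cases hu : x ∘ Sum.inl = 0
    · have hw : x ∘ Sum.inr ≠ 0 := by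
        intro hw
        apply hx
        rw [← Sum.elim_comp_inl_inr x, hu, hw]
        ext (i | i) <;> simp
      rw [hu]
      simp only [Matrix.mulVec_zero, zero_add]
      have h1 : (0:ℝ) < star (x ∘ Sum.inr) ⬝ᵥ D *ᵥ (x ∘ Sum.inr) := hD.dotProduct_mulVec_pos hw
      rw [dotProduct_mulVec] at h1
      have h2 : star (0 : Fin N → ℝ) ᵥ* (A - B * D⁻¹ * Bᴴ) ⬝ᵥ (0 : Fin N → ℝ) = 0 := by
        simp
      rw [h2, add_zero]
      exact h1
    · have h1 : (0:ℝ) ≤ star ((D⁻¹ * Bᴴ) *ᵥ (x ∘ Sum.inl) + x ∘ Sum.inr) ᵥ* D ⬝ᵥ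
          ((D⁻¹ * Bᴴ) *ᵥ (x ∘ Sum.inl) + x ∘ Sum.inr) := by
        rw [← dotProduct_mulVec]
        exact hD.posSemidef.dotProduct_mulVec_nonneg _
      have h2 : (0:ℝ) < star (x ∘ Sum.inl) ᵥ* (A - B * D⁻¹ * Bᴴ) ⬝ᵥ (x ∘ Sum.inl) := by
        rw [← dotProduct_mulVec]
        exact hkey'.dotProduct_mulVec_pos hu
      linarith
  · rintro ⟨δ, hδ, h⟩
    have hherm : (-X).IsHermitian := by
      show (-X)ᴴ = -X
      rw [conjTranspose_neg, conjTranspose_eq_transpose_of_trivial, hX.eq]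
    refine PosDef.of_dotProduct_mulVec_pos hherm fun x hx => ?_
    have hv : Sum.elim x (0 : Fin sd → ℝ) ≠ 0 := by
      intro hv
      apply hx
      ext i
      have := congrFun hv (Sum.inl i)
      simpa using this
    have := h.dotProduct_mulVec_pos hv
    simpa [neg_mulVec, fromBlocks_mulVec, sumElim_dotProduct_sumElim,
      Matrix.mulVec_zero, dotProduct_neg] using this
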